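/- Fix r > 0 and define ε : (0, ∞) → ℝ by ε(θ) = 1 − 2·Φ(−r/θ) − (2θ/(√(2π)·r)) · (1 − e^{−r²/(2θ²)}), where Φ is the cumulative distribution function of the standard normal distribution N(0,1). Then ε is antitone on (0, ∞): for all 0 < θ₁ ≤ θ₂, ε(θ₂) ≤ ε(θ₁). -/

import Mathlib

open ProbabilityTheory MeasureTheory Real

/-- The cumulative distribution function `Φ` of the standard normal
distribution `N(0, 1)`. -/
noncomputable def stdNormalCDF (x : ℝ) : ℝ :=
  ((ProbabilityTheory.gaussianReal 0 1) (Set.Iic x)).toReal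

lemma stdNormalCDF_eq (x : ℝ) :
    stdNormalCDF x = ∫ t in Set.Iic x, gaussianPDFReal 0 1 t := by
  rw [stdNormalCDF, gaussianReal_apply_eq_integral 0 one_ne_zero,
    ENNReal.toReal_ofReal]
  exact setIntegral_nonneg measurableSet_Iic fun t _ => gaussianPDFReal_nonneg 0 1 t

lemma gaussianPDFReal_cont : Continuous (gaussianPDFReal 0 1) := by
  rw [gaussianPDFReal_def]
  fun_prop

lemma stdNormalCDF_hasDerivAt (x : ℝ) :
    HasDerivAt stdNormalCDF (gaussianPDFReal 0 1 x) x := by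
  have : stdNormalCDF = fun y => stdNormalCDF 0 + ∫ t in (0:ℝ)..y, gaussianPDFReal 0 1 t := by
    funext y
    rw [stdNormalCDF_eq, stdNormalCDF_eq,
      intervalIntegral.integral_Iic_sub_Iic ((integrable_gaussianPDFReal 0 1).integrableOn)
        ((integrable_gaussianPDFReal 0 1).integrableOn) |>.symm]
    ring
  rw [this]
  exact (gaussianPDFReal_cont.integral_hasStrictDerivAt 0 x).hasDerivAt.const_add _


/-- The collision probability `ε(θ)` of a single p-stable LSH hash of two
points at Euclidean distance `θ`, with bucket width `r`. -/
noncomputable def collisionProb (r θ : ℝ) : ℝ :=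
  1 - 2 * stdNormalCDF (-r / θ)
    - (2 * θ / (Real.sqrt (2 * Real.pi) * r)) * (1 - Real.exp (-r ^ 2 / (2 * θ ^ 2)))

lemma collisionProb_hasDerivAt (r θ : ℝ) (hr : 0 < r) (hθ : 0 < θ) :
    HasDerivAt (collisionProb r)
      (-(2 / (Real.sqrt (2 * Real.pi) * r)) * (1 - Real.exp (-r ^ 2 / (2 * θ ^ 2)))) θ := by
  have hθ' : θ ≠ 0 := hθ.ne'
  have hS : Real.sqrt (2 * Real.pi) ≠ 0 := (Real.sqrt_pos.mpr (by positivity)).ne'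
  have h1 : HasDerivAt (fun y : ℝ => -r / y) (r / θ ^ 2) θ := by
    have h := (hasDerivAt_inv hθ').const_mul (-r)
    have hfun : (fun y : ℝ => -r / y) = fun y : ℝ => -r * y⁻¹ := by
      funext y; ring
    rw [hfun]
    refine h.congr_deriv ?_
    field_simp
  have hΦ := (stdNormalCDF_hasDerivAt (-r / θ)).comp θ h1
  have hu : HasDerivAt (fun y : ℝ => -r ^ 2 / (2 * y ^ 2)) (r ^ 2 / θ ^ 3) θ := by
    have h := ((hasDerivAt_pow 2 θ).inv (pow_ne_zero 2 hθ')).const_mul (-r ^ 2 / 2)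
    have hfun : (fun y : ℝ => -r ^ 2 / (2 * y ^ 2)) = fun y : ℝ => -r ^ 2 / 2 * (y ^ 2)⁻¹ := by
      funext y; ring
    rw [hfun]
    refine h.congr_deriv ?_
    field_simp
    ring
  have hG := (hasDerivAt_const θ (1:ℝ)).sub hu.exp
  have hlin : HasDerivAt (fun y : ℝ => 2 * y / (Real.sqrt (2 * Real.pi) * r))
      (2 / (Real.sqrt (2 * Real.pi) * r)) θ := by
    have h := (hasDerivAt_id θ).const_mul (2 / (Real.sqrt (2 * Real.pi) * r))
    have hfun : (fun y : ℝ => 2 * y / (Real.sqrt (2 * Real.pi) * r))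
        = fun y : ℝ => 2 / (Real.sqrt (2 * Real.pi) * r) * id y := by
      funext y; simp only [id]; ring
    rw [hfun]
    refine h.congr_deriv ?_
    ring
  have htot := ((hasDerivAt_const θ (1:ℝ)).sub (hΦ.const_mul 2)).sub (hlin.mul hG)
  have hpdf : gaussianPDFReal 0 1 (-r / θ)
      = (Real.sqrt (2 * Real.pi))⁻¹ * Real.exp (-r ^ 2 / (2 * θ ^ 2)) := by
    rw [gaussianPDFReal]
    push_cast
    rw [mul_one]
    congr 2
    field_simp
    ring
  rw [hpdf] at htot
  have hfun : collisionProb r = fun x : ℝ =>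
      1 - 2 * (stdNormalCDF ∘ (fun y : ℝ => -r / y)) x
        - 2 * x / (Real.sqrt (2 * Real.pi) * r) * (1 - Real.exp (-r ^ 2 / (2 * x ^ 2))) := by
    funext x
    simp [collisionProb, Function.comp]
  rw [hfun]
  refine htot.congr_deriv ?_
  simp only [Pi.sub_apply]
  field_simp
  ring

/-- The collision probability `ε` is antitone on `(0, ∞)`. -/
theorem collisionProb_antitone (r : ℝ) (hr : 0 < r) :
    ∀ θ₁ θ₂ : ℝ, 0 < θ₁ → θ₁ ≤ θ₂ → collisionProb r θ₂ ≤ collisionProb r θ₁ := by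
  intro θ₁ θ₂ h1 h12
  have hanti : AntitoneOn (collisionProb r) (Set.Ioi 0) := by
    apply antitoneOn_of_deriv_nonpos (convex_Ioi 0)
    · intro x hx
      exact (collisionProb_hasDerivAt r x hr hx).continuousAt.continuousWithinAt
    · intro x hx
      rw [interior_Ioi] at hx
      exact (collisionProb_hasDerivAt r x hr hx).differentiableAt.differentiableWithinAt
    · intro x hx
      rw [interior_Ioi] at hx
      have hx' : (0:ℝ) < x := hx
      rw [(collisionProb_hasDerivAt r x hr hx).deriv]
      have hE : Real.exp (-r ^ 2 / (2 * x ^ 2)) ≤ 1 := by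
        rw [Real.exp_le_one_iff]
        have : (0:ℝ) < 2 * x ^ 2 := by positivity
        apply div_nonpos_of_nonpos_of_nonneg (by nlinarith) this.le
      have h2 : (0:ℝ) ≤ 2 / (Real.sqrt (2 * Real.pi) * r) := by positivity
      have := mul_nonneg h2 (sub_nonneg.mpr hE)
      linarith
  exact hanti (Set.mem_Ioi.mpr h1) (Set.mem_Ioi.mpr (lt_of_lt_of_le h1 h12)) h12
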